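/- Let ω be a ℂ³-valued 1-form on a surface x₀ with unit normal N₀ (|N₀|² = 1, N₀ᵀdx₀ = 0) satisfying ω ×∧ dx₀ = 0 and N₀ᵀω = 0 (i.e. ω is tangential). Writing the difference of second fundamental forms as s = N₀ᵀ(ω × dx₀) = s₁₁du² + s₁₂du dv + s₂₁dv du + s₂₂dv², the condition ω ×∧ dx₀ = 0 is equivalent to s₁₂ = s₂₁. -/

import Mathlib

open Matrix

/-- For a tangential ℂ³-valued 1-form `ω = ω₁du + ω₂dv` on a surface `x₀` with unit
normal `N₀` (proportional to `∂ᵤx₀ × ∂ᵥx₀`), the condition `ω ×∧ dx₀ = 0`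
(i.e. `ω₁ × ∂ᵥx₀ − ω₂ × ∂ᵤx₀ = 0`) is equivalent to the symmetry `s₁₂ = s₂₁` of the
array `sᵢⱼ = N₀ᵀ(ωᵢ × ∂ⱼx₀)`. -/
theorem omega_wedge_dx_eq_zero_iff_s_symm
    (Xu Xv N₀ ω₁ ω₂ : Fin 3 → ℂ) (c : ℂ) (hc : c ≠ 0)
    (hcross : Xu ⨯₃ Xv = c • N₀)
    (hN : N₀ ⬝ᵥ N₀ = 1)
    (hXu : N₀ ⬝ᵥ Xu = 0) (hXv : N₀ ⬝ᵥ Xv = 0)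
    (hω₁ : N₀ ⬝ᵥ ω₁ = 0) (hω₂ : N₀ ⬝ᵥ ω₂ = 0) :
    ω₁ ⨯₃ Xv - ω₂ ⨯₃ Xu = 0 ↔ N₀ ⬝ᵥ (ω₁ ⨯₃ Xv) = N₀ ⬝ᵥ (ω₂ ⨯₃ Xu) := by
  constructor
  · intro h
    have h' : N₀ ⬝ᵥ (ω₁ ⨯₃ Xv - ω₂ ⨯₃ Xu) = 0 := by rw [h]; simp
    rw [dotProduct_sub, sub_eq_zero] at h'
    exact h'
  · intro h
    set d : Fin 3 → ℂ := ω₁ ⨯₃ Xv - ω₂ ⨯₃ Xu with hd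
    have hNd : N₀ ⬝ᵥ d = 0 := by rw [hd, dotProduct_sub, h, sub_self]
    have hXud : Xu ⬝ᵥ d = 0 := by
      have h1 : Xu ⬝ᵥ (ω₁ ⨯₃ Xv) = ω₁ ⬝ᵥ (Xv ⨯₃ Xu) := by
        rw [triple_product_permutation]
      have h2 : ω₁ ⬝ᵥ (Xv ⨯₃ Xu) = -(ω₁ ⬝ᵥ (Xu ⨯₃ Xv)) := by
        rw [← cross_anticomm, dotProduct_neg]
      have h3 : Xu ⬝ᵥ (ω₂ ⨯₃ Xu) = ω₂ ⬝ᵥ (Xu ⨯₃ Xu) := by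
        rw [triple_product_permutation]
      rw [hd, dotProduct_sub, h1, h2, h3, cross_self, hcross, dotProduct_smul,
        dotProduct_comm, hω₁]
      simp
    have hXvd : Xv ⬝ᵥ d = 0 := by
      have h1 : Xv ⬝ᵥ (ω₁ ⨯₃ Xv) = ω₁ ⬝ᵥ (Xv ⨯₃ Xv) := by
        rw [triple_product_permutation]
      have h3 : Xv ⬝ᵥ (ω₂ ⨯₃ Xu) = ω₂ ⬝ᵥ (Xu ⨯₃ Xv) := by
        rw [triple_product_permutation]
      rw [hd, dotProduct_sub, h1, h3, cross_self, hcross, dotProduct_smul,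
        dotProduct_comm ω₂ N₀, hω₂]
      simp
    set A : Matrix (Fin 3) (Fin 3) ℂ := Matrix.of ![N₀, Xu, Xv] with hA
    have hdet : A.det = c := by
      have hA' : A = ![N₀, Xu, Xv] := rfl
      rw [hA', ← triple_product_eq_det, hcross, dotProduct_smul, hN]
      simp
    have hAd : A *ᵥ d = 0 := by
      funext i
      fin_cases i <;>
        simp [hA, Matrix.mulVec, hNd, hXud, hXvd]
    have hu : IsUnit A.det := by rw [hdet]; exact isUnit_iff_ne_zero.mpr hc
    have : A⁻¹ *ᵥ (A *ᵥ d) = d := by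
      rw [mulVec_mulVec, Matrix.nonsing_inv_mul A hu, one_mulVec]
    rw [hAd, mulVec_zero] at this
    exact this.symm
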